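/- Let X, Y, Z be metric spaces, let r, s ≥ 0, let R be a correspondence between X and Y such that for all (x,y), (x',y') ∈ R one has e^{−r}·d_Y(y,y') − e^r + 1 ≤ d_X(x,x') ≤ e^r·d_Y(y,y') + e^{2r} − e^r, and let S be a correspondence between Y and Z such that for all (y,z), (y',z') ∈ S one has e^{−s}·d_Z(z,z') − e^s + 1 ≤ d_Y(y,y') ≤ e^s·d_Z(z,z') + e^{2s} − e^s. Define T = { (x,z) : there exists y ∈ Y with (x,y) ∈ R and (y,z) ∈ S }. Then T is a correspondence between X and Z, and for all (x,z), (x',z') ∈ T one has e^{−(r+s)}·d_Z(z,z') − e^{r+s} + 1 ≤ d_X(x,x') ≤ e^{r+s}·d_Z(z,z') + e^{2(r+s)} − e^{r+s}. -/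
import Mathlib


open ENNReal Real

/-- A correspondence between X and Y: both projections are surjective. -/
def IsCorrespondence {X Y : Type*} (R : Set (X × Y)) : Prop :=
  (∀ x : X, ∃ y : Y, (x, y) ∈ R) ∧ (∀ y : Y, ∃ x : X, (x, y) ∈ R)

/-- The composition of two correspondences. -/
def compCor {X Y Z : Type*} (R : Set (X × Y)) (S : Set (Y × Z)) : Set (X × Z) :=
  {pz : X × Z | ∃ y : Y, (pz.1, y) ∈ R ∧ (y, pz.2) ∈ S}

/-- Composition of correspondences with controlled quasi-isometric distortion. -/
theorem compCor_isCorrespondence_and_distortion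
    {X Y Z : Type*} [MetricSpace X] [MetricSpace Y] [MetricSpace Z]
    (r s : ℝ) (hr : 0 ≤ r) (hs : 0 ≤ s)
    (R : Set (X × Y)) (hR : IsCorrespondence R)
    (S : Set (Y × Z)) (hS : IsCorrespondence S)
    (hRdis : ∀ p ∈ R, ∀ q ∈ R,
      exp (-r) * dist p.2 q.2 - exp r + 1 ≤ dist p.1 q.1 ∧
      dist p.1 q.1 ≤ exp r * dist p.2 q.2 + exp (2 * r) - exp r)
    (hSdis : ∀ p ∈ S, ∀ q ∈ S,
      exp (-s) * dist p.2 q.2 - exp s + 1 ≤ dist p.1 q.1 ∧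
      dist p.1 q.1 ≤ exp s * dist p.2 q.2 + exp (2 * s) - exp s) :
    IsCorrespondence (compCor R S) ∧
    ∀ p ∈ compCor R S, ∀ q ∈ compCor R S,
      exp (-(r + s)) * dist p.2 q.2 - exp (r + s) + 1 ≤ dist p.1 q.1 ∧
      dist p.1 q.1 ≤ exp (r + s) * dist p.2 q.2 + exp (2 * (r + s)) - exp (r + s) := by

  obtain ⟨hR1, hR2⟩ := hR
  obtain ⟨hS1, hS2⟩ := hS
  refine ⟨⟨?_, ?_⟩, ?_⟩
  · intro x
    obtain ⟨y, hy⟩ := hR1 x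
    obtain ⟨z, hz⟩ := hS1 y
    exact ⟨z, y, hy, hz⟩
  · intro z
    obtain ⟨y, hy⟩ := hS2 z
    obtain ⟨x, hx⟩ := hR2 y
    exact ⟨x, y, hx, hy⟩
  · rintro ⟨x, z⟩ ⟨y, hxy, hyz⟩ ⟨x', z'⟩ ⟨y', hxy', hyz'⟩
    obtain ⟨hl1, hu1⟩ := hRdis (x, y) hxy (x', y') hxy'
    obtain ⟨hl2, hu2⟩ := hSdis (y, z) hyz (y', z') hyz'
    simp only at hl1 hu1 hl2 hu2 ⊢
    have h1 : exp (-(r + s)) = exp (-r) * exp (-s) := by rw [neg_add, Real.exp_add]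
    have h2 : exp (r + s) = exp r * exp s := (Real.exp_add r s)
    have h3 : exp (2 * (r + s)) = exp (2 * r) * exp (2 * s) := by
      rw [mul_add, Real.exp_add]
    have h4 : exp (2 * r) = exp r * exp r := by rw [two_mul, Real.exp_add]
    have h5 : exp (2 * s) = exp s * exp s := by rw [two_mul, Real.exp_add]
    have her : 1 ≤ exp r := Real.one_le_exp hr
    have hes : 1 ≤ exp s := Real.one_le_exp hs
    have hpr : (0 : ℝ) < exp (-r) := Real.exp_pos _
    have hps : (0 : ℝ) < exp (-s) := Real.exp_pos _
    have hir : exp (-r) * exp r = 1 := by rw [← Real.exp_add]; simp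
    have his : exp (-s) * exp s = 1 := by rw [← Real.exp_add]; simp
    have hmr : exp (-r) ≤ exp r := Real.exp_le_exp.mpr (by linarith)
    have hms : exp (-s) ≤ exp s := Real.exp_le_exp.mpr (by linarith)
    have hdz : (0 : ℝ) ≤ dist z z' := dist_nonneg
    have hdy : (0 : ℝ) ≤ dist y y' := dist_nonneg
    constructor
    · have key : (0 : ℝ) ≤ (exp s - 1) * (exp r - exp (-r)) :=
        mul_nonneg (by linarith) (by linarith)
      nlinarith [mul_le_mul_of_nonneg_left hl2 hpr.le]
    · have key : (0 : ℝ) ≤ (exp r * (exp s * exp s) - exp r) * (exp r - 1) :=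
        mul_nonneg (by nlinarith) (by linarith)
      nlinarith [mul_le_mul_of_nonneg_left hu2 (Real.exp_pos r).le]
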